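/- Scaled limit of the fusion penalty difference: let (λ₂(n))_{n∈ℕ} be a sequence of nonnegative reals with λ₂(n)/√n → λ₂⁰ ≥ 0 as n → ∞, and let w_{st} ≥ 0 for 1 ≤ s < t ≤ k. Then for any fixed Θ, U ∈ ℝ^{p×k}, λ₂(n) · Σ_{s<t} w_{st} ( ‖Θ_s − Θ_t + (U_s − U_t)/√n‖₂ − ‖Θ_s − Θ_t‖₂ ) converges as n → ∞ to λ₂⁰ · G(U; Θ). -/

import Mathlib

open Filter Topology

/-- Euclidean (ℓ₂) norm on ℝ^p. -/
noncomputable def l2norm {p : ℕ} (v : Fin p → ℝ) : ℝ := Real.sqrt (∑ j, v j ^ 2)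

lemma l2norm_zero {p : ℕ} : l2norm (0 : Fin p → ℝ) = 0 := by
  simp [l2norm]

lemma l2norm_smul_nonneg {p : ℕ} (c : ℝ) (hc : 0 ≤ c) (v : Fin p → ℝ) :
    l2norm (c • v) = c * l2norm v := by
  simp only [l2norm, Pi.smul_apply, smul_eq_mul, mul_pow]
  rw [← Finset.mul_sum, Real.sqrt_mul (by positivity), Real.sqrt_sq hc]

lemma core_limit {p : ℕ} (lam2 : ℕ → ℝ) (lam20 : ℝ)
    (hlim : Tendsto (fun n : ℕ => lam2 n / Real.sqrt n) atTop (𝓝 lam20))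
    (a u : Fin p → ℝ) :
    Tendsto (fun n : ℕ => lam2 n * (l2norm (a + (Real.sqrt n)⁻¹ • u) - l2norm a))
      atTop (𝓝 (lam20 * (if a = 0 then l2norm u
        else (∑ j, a j * u j) / l2norm a))) := by
  have key : Tendsto (fun n : ℕ =>
      Real.sqrt n * (l2norm (a + (Real.sqrt n)⁻¹ • u) - l2norm a)) atTop
      (𝓝 (if a = 0 then l2norm u else (∑ j, a j * u j) / l2norm a)) := by
    by_cases ha : a = 0
    · subst ha
      rw [if_pos rfl]
      apply tendsto_const_nhds.congr'
      filter_upwards [eventually_ge_atTop 1] with n hn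
      have hpos : (0:ℝ) < Real.sqrt n := Real.sqrt_pos.mpr (by exact_mod_cast Nat.pos_of_ne_zero (by omega))
      rw [zero_add, l2norm_smul_nonneg _ (inv_nonneg.mpr hpos.le), l2norm_zero, sub_zero,
        ← mul_assoc, mul_inv_cancel₀ hpos.ne', one_mul]
    · rw [if_neg ha]
      have ha0 : (0:ℝ) < ∑ j, a j ^ 2 := by
        obtain ⟨j, hj⟩ := Function.ne_iff.mp ha
        refine Finset.sum_pos' (fun i _ => sq_nonneg _) ⟨j, Finset.mem_univ j, ?_⟩
        have : a j ≠ 0 := by simpa using hj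
        positivity
      have hQ : HasDerivAt (fun t : ℝ => ∑ j, (a j + t * u j) ^ 2)
          (∑ j : Fin p, 2 * a j * u j) 0 := by
        have h : ∀ j : Fin p, HasDerivAt (fun t : ℝ => (a j + t * u j) ^ 2)
            (2 * a j * u j) 0 := by
          intro j
          have h1 : HasDerivAt (fun t : ℝ => a j + t * u j) (u j) 0 := by
            simpa using ((hasDerivAt_id (0:ℝ)).mul_const (u j)).const_add (a j)
          simpa using h1.fun_pow 2
        simpa using HasDerivAt.fun_sum (fun j _ => h j)
      have hQ0 : (fun t : ℝ => ∑ j, (a j + t * u j) ^ 2) 0 ≠ 0 := by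
        simpa using ha0.ne'
      have hs : HasDerivAt (fun t : ℝ => Real.sqrt (∑ j, (a j + t * u j) ^ 2))
          ((∑ j : Fin p, 2 * a j * u j) /
            (2 * Real.sqrt ((fun t : ℝ => ∑ j, (a j + t * u j) ^ 2) 0))) 0 := hQ.sqrt hQ0
      have hval : (∑ j : Fin p, 2 * a j * u j) /
          (2 * Real.sqrt ((fun t : ℝ => ∑ j, (a j + t * u j) ^ 2) 0))
          = (∑ j, a j * u j) / l2norm a := by
        have h2 : (∑ j : Fin p, 2 * a j * u j) = 2 * ∑ j, a j * u j := by
          rw [Finset.mul_sum]; exact Finset.sum_congr rfl fun j _ => by ring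
        simp only [h2, l2norm, zero_mul, add_zero]
        rw [mul_div_mul_left _ _ (two_ne_zero)]
      rw [hval] at hs
      have hslope := hasDerivAt_iff_tendsto_slope.mp hs
      have hε : Tendsto (fun n : ℕ => (Real.sqrt n)⁻¹) atTop (𝓝[≠] (0:ℝ)) := by
        rw [tendsto_nhdsWithin_iff]
        constructor
        · have hsq : Tendsto Real.sqrt atTop atTop := by
            rw [tendsto_atTop_atTop]
            intro b
            exact ⟨b ^ 2, fun x hx => le_trans (le_trans (le_abs_self b)
              (Real.sqrt_sq_eq_abs b).symm.le) (Real.sqrt_le_sqrt hx)⟩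
          exact tendsto_inv_atTop_zero.comp (hsq.comp tendsto_natCast_atTop_atTop)
        · filter_upwards [eventually_ge_atTop 1] with n hn
          have hpos : (0:ℝ) < Real.sqrt n :=
            Real.sqrt_pos.mpr (by exact_mod_cast Nat.pos_of_ne_zero (by omega))
          simpa using (inv_pos.mpr hpos).ne'
      refine (hslope.comp hε).congr' ?_
      filter_upwards [eventually_ge_atTop 1] with n hn
      have hpos : (0:ℝ) < Real.sqrt n :=
        Real.sqrt_pos.mpr (by exact_mod_cast Nat.pos_of_ne_zero (by omega))
      have hl : ∀ t : ℝ, l2norm (a + t • u) = Real.sqrt (∑ j, (a j + t * u j) ^ 2) := by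
        intro t; simp [l2norm]
      simp only [Function.comp, slope_def_field]
      rw [sub_zero, div_eq_mul_inv, inv_inv]
      simp only [l2norm, Pi.add_apply, Pi.smul_apply, smul_eq_mul, zero_mul, add_zero]
      ring
  have hfin := hlim.mul key
  apply hfin.congr'
  filter_upwards [eventually_ge_atTop 1] with n hn
  have hpos : (0:ℝ) < Real.sqrt n :=
    Real.sqrt_pos.mpr (by exact_mod_cast Nat.pos_of_ne_zero (by omega))
  field_simp

/-- if λ₂(n)/√n → λ₂⁰ ≥ 0 and w_{st} ≥ 0, then for fixed Θ, U ∈ ℝ^{p×k},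
λ₂(n) · Σ_{s<t} w_{st} ( ‖Θ_s − Θ_t + (U_s − U_t)/√n‖₂ − ‖Θ_s − Θ_t‖₂ ) → λ₂⁰ · G(U; Θ),
where G(U; Θ) = Σ_{s<t} w_{st} [ ⟨Θ_s − Θ_t, U_s − U_t⟩/‖Θ_s − Θ_t‖₂ · 1(Θ_s ≠ Θ_t)
+ ‖U_s − U_t‖₂ · 1(Θ_s = Θ_t) ]. -/
theorem scaled_fusion_penalty_difference_limit
    (p k : ℕ) (lam2 : ℕ → ℝ) (lam20 : ℝ)
    (hnn : ∀ n, 0 ≤ lam2 n) (hlam20 : 0 ≤ lam20)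
    (hlim : Filter.Tendsto (fun n : ℕ => lam2 n / Real.sqrt n) atTop (𝓝 lam20))
    (w : Fin k → Fin k → ℝ) (hw : ∀ s t : Fin k, s < t → 0 ≤ w s t)
    (Θ U : Fin k → Fin p → ℝ) :
    Filter.Tendsto
      (fun n : ℕ =>
        lam2 n * ∑ s, ∑ t, (if s < t then
          w s t * (l2norm (Θ s - Θ t + (Real.sqrt n)⁻¹ • (U s - U t))
                    - l2norm (Θ s - Θ t)) else 0))
      atTop
      (𝓝 (lam20 * ∑ s, ∑ t, (if s < t then
        w s t * (if Θ s = Θ t then l2norm (U s - U t)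
          else (∑ j, (Θ s j - Θ t j) * (U s j - U t j)) / l2norm (Θ s - Θ t))
        else 0))) := by
  have hmain : ∀ s t : Fin k, Tendsto (fun n : ℕ => lam2 n * (if s < t then
      w s t * (l2norm (Θ s - Θ t + (Real.sqrt n)⁻¹ • (U s - U t)) - l2norm (Θ s - Θ t)) else 0))
      atTop (𝓝 (lam20 * (if s < t then w s t * (if Θ s = Θ t then l2norm (U s - U t)
        else (∑ j, (Θ s j - Θ t j) * (U s j - U t j)) / l2norm (Θ s - Θ t)) else 0))) := by
    intro s t
    by_cases hst : s < t
    · simp only [if_pos hst]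
      have hc := core_limit lam2 lam20 hlim (Θ s - Θ t) (U s - U t)
      have heq : (if Θ s - Θ t = 0 then l2norm (U s - U t)
          else (∑ j, (Θ s - Θ t) j * (U s - U t) j) / l2norm (Θ s - Θ t))
          = (if Θ s = Θ t then l2norm (U s - U t)
          else (∑ j, (Θ s j - Θ t j) * (U s j - U t j)) / l2norm (Θ s - Θ t)) := by
        simp [sub_eq_zero, Pi.sub_apply]
      rw [heq] at hc
      have h2 := hc.const_mul (w s t)
      rw [mul_left_comm] at h2
      exact h2.congr (fun n => mul_left_comm _ _ _)
    · simpa [hst] using (tendsto_const_nhds : Tendsto (fun _ : ℕ => (0:ℝ)) atTop (𝓝 0))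
  have hsum := tendsto_finset_sum Finset.univ
    (fun s (_ : s ∈ Finset.univ) => tendsto_finset_sum Finset.univ
      (fun t (_ : t ∈ Finset.univ) => hmain s t))
  simp only [Finset.mul_sum] at hsum ⊢
  exact hsum
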